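/- arXiv:2401.11309 — 5 statements merged into one kernel-verified Lean document; each statement's English description precedes it below -/
import Mathlib

section
/- Fix a prime p, an even integer d ≥ 2, a nonzero rational a, and b = σ·p^e with σ ∈ {1, −1} and e ≥ 0 an integer. Then every rational periodic cycle of ψ_{d,a,b} on ℙ¹(ℚ) has length at most 2, and every rational periodic cycle of length 2 consists of two affine points z and −z for some z ∈ ℚ (i.e., ψ_{d,a,b}(z) = −z and ψ_{d,a,b}(−z) = z). -/
/-- The map `ψ_{d,a,b} : ℙ¹(ℚ) → ℙ¹(ℚ)`, with `ℙ¹(ℚ)` modeled as `Option ℚ`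
(`some z` is the affine point `z`, and `none` is the point at infinity `[1 : 0]`).
In homogeneous coordinates the map is `[X : Y] ↦ [X·Y^{d−1} : a·X^d + b·Y^d]`;
on the affine chart it is `z ↦ z / (a·z^d + b)`, the point at infinity mapping to `0`. -/
def psi (d : ℕ) (a b : ℚ) : Option ℚ → Option ℚ
  | none => some 0
  | some z => if a * z ^ d + b = 0 then none else some (z / (a * z ^ d + b))

theorem valq_p (q p : ℕ) (hq : q.Prime) (h : q ≠ p) (hp : p.Prime) : padicValRat q (p:ℚ) = 0 := by
  rw [padicValRat.of_nat,
    padicValNat.eq_zero_of_not_dvd (fun hd => h ((Nat.prime_dvd_prime_iff_eq hq hp).1 hd))]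
  simp

theorem val_zpow (q : ℕ) [Fact q.Prime] {x : ℚ} (hx : x ≠ 0) (k : ℤ) :
    padicValRat q (x ^ k) = k * padicValRat q x := by
  obtain ⟨m, rfl | rfl⟩ := Int.eq_nat_or_neg k
  · rw [zpow_natCast, padicValRat.pow x]
  · rw [zpow_neg, zpow_natCast, padicValRat.inv, padicValRat.pow x]; push_cast; ring

theorem valp_ppow (p : ℕ) [hp : Fact p.Prime] (k : ℤ) :
    padicValRat p ((p:ℚ) ^ k) = k := by
  rw [val_zpow p (by exact_mod_cast hp.out.ne_zero) k, padicValRat.self hp.out.one_lt, mul_one]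

theorem valq_ppow (q p : ℕ) [Fact q.Prime] (hq : q.Prime) (h : q ≠ p) (hp : p.Prime) (k : ℤ) :
    padicValRat q ((p:ℚ) ^ k) = 0 := by
  rw [val_zpow q (by exact_mod_cast hp.ne_zero) k, valq_p q p hq h hp, mul_zero]

theorem den_one_of_nonneg (y : ℚ) (h : ∀ q : ℕ, q.Prime → 0 ≤ padicValRat q y) : y.den = 1 := by
  by_contra hd
  have hq := Nat.minFac_prime hd
  haveI : Fact (y.den.minFac).Prime := ⟨hq⟩
  have h1 : 1 ≤ padicValNat y.den.minFac y.den :=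
    one_le_padicValNat_of_dvd y.pos.ne' (Nat.minFac_dvd _)
  have h2 : padicValInt y.den.minFac y.num = 0 := by
    unfold padicValInt
    apply padicValNat.eq_zero_of_not_dvd
    intro hdvd
    have h3 : y.den.minFac ∣ Nat.gcd y.num.natAbs y.den := Nat.dvd_gcd hdvd (Nat.minFac_dvd _)
    rw [y.reduced] at h3
    exact Nat.Prime.one_lt hq |>.ne' (Nat.dvd_one.mp h3)
  have := h y.den.minFac hq
  rw [padicValRat_def, h2] at this
  omega

theorem num_one_of_zero (y : ℚ) (hy : 0 < y) (h : ∀ q : ℕ, q.Prime → padicValRat q y = 0) :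
    y = 1 := by
  have hden := den_one_of_nonneg y (fun q hq => (h q hq).ge)
  by_contra hne
  have hnum : y.num.natAbs ≠ 1 := by
    intro h1
    apply hne
    have h2 : 0 < y.num := Rat.num_pos.2 hy
    have : y.num = 1 := by omega
    rw [← y.num_div_den, this, hden]; norm_num
  have hq := Nat.minFac_prime hnum
  haveI : Fact (y.num.natAbs.minFac).Prime := ⟨hq⟩
  have hpos : 0 < y.num.natAbs := by
    have h2 : 0 < y.num := Rat.num_pos.2 hy
    omega
  have h1 : 1 ≤ padicValNat y.num.natAbs.minFac y.num.natAbs :=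
    one_le_padicValNat_of_dvd hpos.ne' (Nat.minFac_dvd _)
  have h5 := h y.num.natAbs.minFac hq
  rw [padicValRat_def, hden] at h5
  unfold padicValInt at h5
  rw [padicValNat.one] at h5
  omega


/-- A nonzero rational with zero valuation at every prime `q ≠ p` is `± p^(v_p)`. -/
theorem eq_ppow_of_vals (p : ℕ) (hp : p.Prime) (x : ℚ) (hx : x ≠ 0)
    (h : ∀ q : ℕ, q.Prime → q ≠ p → padicValRat q x = 0) :
    x = (p:ℚ) ^ (padicValRat p x) ∨ x = -(p:ℚ) ^ (padicValRat p x) := by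
  haveI : Fact p.Prime := ⟨hp⟩
  set v := padicValRat p x with hv
  have hppow : (0:ℚ) < (p:ℚ) ^ v := by
    apply zpow_pos
    exact_mod_cast hp.pos
  have habs : |x| = (p:ℚ) ^ v := by
    have h1 : |x| * ((p:ℚ) ^ v)⁻¹ = 1 := by
      apply num_one_of_zero
      · positivity
      · intro q hq
        haveI : Fact q.Prime := ⟨hq⟩
        rw [padicValRat.mul (by positivity) (by positivity), padicValRat.inv]
        have habsv : padicValRat q |x| = padicValRat q x := by
          rcases abs_choice x with h2 | h2 <;> rw [h2]
          exact padicValRat.neg x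
        rcases eq_or_ne q p with rfl | hne
        · rw [habsv, valp_ppow, ← hv]; ring
        · rw [habsv, h q hq hne, valq_ppow q p hq hne hp]; ring
    field_simp at h1
    exact h1
  rcases abs_choice x with h2 | h2
  · left; rw [← h2, habs]
  · right; rw [← habs]; linarith


theorem val0 (q : ℕ) (hq : q.Prime) (c : ℚ) (hc : c ≠ 0) (hvc : padicValRat q c = 0)
    (d n : ℕ) (hd : 2 ≤ d) (hn : 0 < n) (u : ℕ → ℚ) (hpos : ∀ i, 0 < u i)
    (hrec : ∀ i, u (i + 1) = u i / (u i - c) ^ d)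
    (hper : ∀ i, u (i + n) = u i) :
    ∀ i, 0 ≤ padicValRat q (u i) ∧ padicValRat q (u i - c) = 0 := by
  haveI : Fact q.Prime := ⟨hq⟩
  have hu0 : ∀ i, u i ≠ 0 := fun i => (hpos i).ne'
  have ht0 : ∀ i, u i - c ≠ 0 := by
    intro i h
    have := hrec i
    rw [h, zero_pow (by omega), div_zero] at this
    exact (hpos (i + 1)).ne' this
  set V : ℕ → ℤ := fun i => padicValRat q (u i) with hV
  set T : ℕ → ℤ := fun i => padicValRat q (u i - c) with hT
  have hrecV : ∀ i, V (i + 1) = V i - d * T i := by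
    intro i
    show padicValRat q (u (i+1)) = _
    rw [hrec i, padicValRat.div (hu0 i) (pow_ne_zero _ (ht0 i)), padicValRat.pow (u i - c)]
  have hmin : ∀ i, V i ≠ 0 → T i = min (V i) 0 := by
    intro i hne
    show padicValRat q (u i - c) = min (padicValRat q (u i)) 0
    rw [sub_eq_add_neg, padicValRat.add_eq_min (by rw [← sub_eq_add_neg]; exact ht0 i) (hu0 i)
      (neg_ne_zero.mpr hc) (by rw [padicValRat.neg, hvc]; exact hne), padicValRat.neg, hvc]
  have hminle : ∀ i, V i = 0 → 0 ≤ T i := by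
    intro i h0
    have h1 := padicValRat.min_le_padicValRat_add (p := q)
      (q := u i) (r := -c) (by rw [← sub_eq_add_neg]; exact ht0 i)
    rw [padicValRat.neg, hvc, ← sub_eq_add_neg] at h1
    have h2 : padicValRat q (u i) = 0 := h0
    rw [h2, min_self] at h1
    exact h1
  have hpres : ∀ i, 0 < V i → V (i + 1) = V i := by
    intro i hpos'
    have h1 : T i = 0 := by rw [hmin i hpos'.ne', min_eq_right hpos'.le]
    rw [hrecV i, h1, mul_zero, sub_zero]
  have step1 : ∀ i, 0 ≤ V i := by
    intro i
    by_contra hneg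
    push_neg at hneg
    have hT1 : T i = V i := by rw [hmin i hneg.ne, min_eq_left hneg.le]
    have hV1 : V (i + 1) = V i - d * V i := by rw [hrecV i, hT1]
    have hd' : (2:ℤ) ≤ d := by exact_mod_cast hd
    have hV1pos : 0 < V (i + 1) := by rw [hV1]; nlinarith
    have hchain : ∀ k, V (i + 1 + k) = V (i + 1) := by
      intro k
      induction k with
      | zero => rfl
      | succ k ih =>
        have h3 : V (i + 1 + k + 1) = V (i + 1 + k) := hpres _ (ih ▸ hV1pos)
        rw [show i + 1 + (k+1) = i + 1 + k + 1 from rfl, h3, ih]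
    have hper' : V (i + n) = V i := by show padicValRat q (u (i+n)) = _; rw [hper i]
    have h4 : V i = V (i + 1) := by
      have h5 := hchain (n - 1)
      rw [show i + 1 + (n - 1) = i + n by omega] at h5
      rw [← h5, hper']
    rw [hV1] at h4
    nlinarith
  have step2 : ∀ i, 0 ≤ T i := by
    intro i
    rcases (step1 i).lt_or_eq with h | h
    · rw [hmin i h.ne', min_eq_right h.le]
    · exact hminle i h.symm
  intro i
  refine ⟨step1 i, ?_⟩
  have hanti : ∀ j k, V (j + k) ≤ V j := by
    intro j k
    induction k with
    | zero => simp
    | succ k ih =>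
      have hd0 : (0:ℤ) ≤ d := by positivity
      have h6 : V (j + k + 1) ≤ V (j + k) := by
        rw [hrecV (j + k)]
        have := step2 (j + k)
        nlinarith
      calc V (j + (k+1)) = V (j + k + 1) := by ring_nf
        _ ≤ V (j + k) := h6
        _ ≤ V j := ih
  have hper' : V (i + n) = V i := by show padicValRat q (u (i+n)) = _; rw [hper i]
  have h1 : V (i + 1) ≤ V i := by simpa using hanti i 1
  have h2 : V (i + n) ≤ V (i + 1) := by
    have h7 := hanti (i + 1) (n - 1)
    rwa [show i + 1 + (n - 1) = i + n by omega] at h7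
  have heq : V (i + 1) = V i := le_antisymm h1 (hper' ▸ h2)
  have h8 := hrecV i
  rw [heq] at h8
  have hd' : (1:ℤ) ≤ d := by exact_mod_cast (by omega : 1 ≤ d)
  have hT2 := step2 i
  have : T i = 0 := by nlinarith
  exact this


/-- No cycle for `u ↦ u/(u+c)^d` on positive rationals when `c ≥ 1`. -/
theorem easy_branch (c : ℚ) (hc : 1 ≤ c) (d n : ℕ) (hd : 2 ≤ d) (hn : 0 < n)
    (u : ℕ → ℚ) (hpos : ∀ i, 0 < u i)
    (hrec : ∀ i, u (i + 1) = u i / (u i + c) ^ d)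
    (hper : u n = u 0) : False := by
  have hdec : ∀ i, u (i + 1) < u i := by
    intro i
    rw [hrec i]
    have h1 : (1:ℚ) < u i + c := by linarith [hpos i]
    have h2 : (1:ℚ) < (u i + c) ^ d := one_lt_pow₀ h1 (by omega)
    exact div_lt_self (hpos i) h2
  have hlt : ∀ k, u (k + 1) < u 0 := by
    intro k
    induction k with
    | zero => exact hdec 0
    | succ k ih => exact (hdec (k + 1)).trans ih
  have := hlt (n - 1)
  rw [show n - 1 + 1 = n by omega, hper] at this
  exact lt_irrefl _ this


theorem cancel_helper {P : ℚ} (hP : P ≠ 0) (A B C : ℤ) (M s : ℚ)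
    (h : M * P ^ A - P ^ B = s * P ^ C) : M - P ^ (B - A) = s * P ^ (C - A) := by
  have e1 : P ^ (B - A) * P ^ A = P ^ B := by rw [← zpow_add₀ hP, sub_add_cancel]
  have e2 : P ^ (C - A) * P ^ A = P ^ C := by rw [← zpow_add₀ hP, sub_add_cancel]
  have h1 : (M - P ^ (B - A)) * P ^ A = (s * P ^ (C - A)) * P ^ A := by
    linear_combination h - e1 - s * e2
  exact mul_right_cancel₀ (zpow_ne_zero A hP) h1

theorem ppow_cast (p : ℕ) (E : ℤ) (hE : 0 ≤ E) :
    ((p:ℚ)) ^ E = ((p ^ E.toNat : ℕ) : ℚ) := by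
  rw [Nat.cast_pow, ← zpow_natCast, Int.toNat_of_nonneg hE]


set_option maxHeartbeats 1000000 in
theorem dio (p : ℕ) (hp : p.Prime) (e : ℕ) (he : 1 ≤ e) (d : ℕ) (hd : 2 ≤ d)
    (m : ℕ) (hm : ¬ p ∣ m) (hm1 : 1 ≤ m) (V τ : ℕ → ℤ)
    (heq : ∀ i, (m:ℚ) * (p:ℚ) ^ (V i) - (p:ℚ) ^ (e:ℤ) = (p:ℚ) ^ (τ i) ∨
                (m:ℚ) * (p:ℚ) ^ (V i) - (p:ℚ) ^ (e:ℤ) = -(p:ℚ) ^ (τ i))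
    (hV : ∀ i, V (i + 1) = V i - d * τ i)
    (j : ℕ) (hj : τ j < 0) : False := by
  haveI : Fact p.Prime := ⟨hp⟩
  have hp2 : 2 ≤ p := hp.two_le
  have hP0 : (p:ℚ) ≠ 0 := by exact_mod_cast hp.ne_zero
  have hP1 : (1:ℚ) ≤ (p:ℚ) := by exact_mod_cast Nat.one_le_of_lt hp2
  have hd' : (2:ℤ) ≤ (d:ℤ) := by exact_mod_cast hd
  have he' : (1:ℤ) ≤ (e:ℤ) := by exact_mod_cast he
  -- valuation facts
  have hvalm : padicValRat p (m:ℚ) = 0 := by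
    rw [padicValRat.of_nat, padicValNat.eq_zero_of_not_dvd hm]; simp
  have hvalL : ∀ i, padicValRat p ((m:ℚ) * (p:ℚ) ^ (V i)) = V i := by
    intro i
    rw [padicValRat.mul (by exact_mod_cast Nat.one_le_iff_ne_zero.mp hm1)
      (zpow_ne_zero _ hP0), hvalm, valp_ppow]
    ring
  have fact_min : ∀ i, V i ≠ (e:ℤ) → τ i = min (V i) (e:ℤ) := by
    intro i hne
    have hsum : (m:ℚ) * (p:ℚ) ^ (V i) + (-(p:ℚ) ^ (e:ℤ)) ≠ 0 := by
      rcases heq i with h | h <;> rw [← sub_eq_add_neg, h]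
      · exact zpow_ne_zero _ hP0
      · exact neg_ne_zero.mpr (zpow_ne_zero _ hP0)
    have h1 : padicValRat p ((m:ℚ) * (p:ℚ) ^ (V i) - (p:ℚ) ^ (e:ℤ)) = min (V i) (e:ℤ) := by
      rw [sub_eq_add_neg, padicValRat.add_eq_min hsum
        (mul_ne_zero (by exact_mod_cast Nat.one_le_iff_ne_zero.mp hm1) (zpow_ne_zero _ hP0))
        (neg_ne_zero.mpr (zpow_ne_zero _ hP0))
        (by rw [hvalL, padicValRat.neg, valp_ppow]; exact hne), hvalL, padicValRat.neg, valp_ppow]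
    rcases heq i with h | h <;> rw [h] at h1
    · rwa [valp_ppow] at h1
    · rwa [padicValRat.neg, valp_ppow] at h1
  -- extraction at negative valuations
  have neg_extract : ∀ i, V i < 0 → ∃ k : ℕ, (e:ℤ) + 1 ≤ (k:ℤ) ∧ V i = (e:ℤ) - (k:ℤ) ∧
      ((m:ℤ) = (p:ℤ) ^ k + 1 ∨ (m:ℤ) = (p:ℤ) ^ k - 1) := by
    intro i hVi
    have hτi : τ i = V i := by
      rw [fact_min i (by omega), min_eq_left (by omega)]
    refine ⟨((e:ℤ) - V i).toNat, by omega, by omega, ?_⟩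
    have hE : (0:ℤ) ≤ (e:ℤ) - V i := by omega
    have hcast : (p:ℚ) ^ ((e:ℤ) - V i) = ((p ^ ((e:ℤ) - V i).toNat : ℕ) : ℚ) :=
      ppow_cast p _ hE
    rcases heq i with h | h
    · left
      have h2 := cancel_helper hP0 (V i) (e:ℤ) (τ i) (m:ℚ) 1 (by rw [one_mul]; exact h)
      rw [hτi, sub_self, zpow_zero, mul_one, hcast] at h2
      have : (m:ℚ) = ((p ^ ((e:ℤ) - V i).toNat : ℕ) : ℚ) + 1 := by linarith
      exact_mod_cast this
    · right
      have h2 := cancel_helper hP0 (V i) (e:ℤ) (τ i) (m:ℚ) (-1) (by rw [neg_one_mul]; exact h)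
      rw [hτi, sub_self, zpow_zero, mul_one, hcast] at h2
      have : (m:ℚ) = ((p ^ ((e:ℤ) - V i).toNat : ℕ) : ℚ) - 1 := by linarith
      exact_mod_cast this
  -- setup at index j
  have hVj : V j < 0 := by
    by_contra hge
    push_neg at hge
    have := fact_min j
    rcases eq_or_ne (V j) (e:ℤ) with h | h
    · -- V j = e: τ j = e + v_p(m-1) ≥ 0 contradiction with τ j < 0 ; use valuation directly
      -- m * p^e - p^e = (m-1) p^e ; if m = 1 RHS = 0 impossible; val ≥ e ≥ 0
      rcases heq j with h1 | h1 <;> rw [h] at h1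
      · -- (m-1) * p^e = p^(τ j)
        have h2 := cancel_helper hP0 (e:ℤ) (e:ℤ) (τ j) (m:ℚ) 1 (by rw [one_mul]; exact h1)
        rw [sub_self, zpow_zero] at h2
        have hm2 : (1:ℚ) ≤ (m:ℚ) := by exact_mod_cast hm1
        have h3 : (p:ℚ) ^ (τ j - (e:ℤ)) < 1 := by
          calc (p:ℚ) ^ (τ j - (e:ℤ)) ≤ (p:ℚ) ^ (-1:ℤ) := zpow_le_zpow_right₀ hP1 (by omega)
            _ < 1 := by
                rw [zpow_neg_one]
                rw [inv_lt_one_iff₀]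
                right
                exact_mod_cast hp.one_lt
        -- h2 : m - 1 = p^(τ j - e) > 0 so m ≥ 2, but also m - 1 = p^(neg) < 1 means m - 1 < 1, m < 2
        -- but m - 1 is a nonneg integer equal to positive non-integer... simpler: m-1 ≥ 1 or = 0
        have hpow_pos : (0:ℚ) < (p:ℚ) ^ (τ j - (e:ℤ)) := by positivity
        have : (1:ℚ) < (m:ℚ) := by linarith [h2]
        have hm3 : (2:ℚ) ≤ (m:ℚ) := by exact_mod_cast (by exact_mod_cast this : (1:ℕ) < m)
        linarith [h2]
      · -- (m-1) * p^e = -p^(τ j) < 0 but m ≥ 1 so LHS ≥ 0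
        have h2 := cancel_helper hP0 (e:ℤ) (e:ℤ) (τ j) (m:ℚ) (-1) (by rw [neg_one_mul]; exact h1)
        rw [sub_self, zpow_zero] at h2
        have hm2 : (1:ℚ) ≤ (m:ℚ) := by exact_mod_cast hm1
        have hpow_pos : (0:ℚ) < (p:ℚ) ^ (τ j - (e:ℤ)) := by positivity
        nlinarith [h2]
    · have := fact_min j h
      omega

  -- main chain
  obtain ⟨k, hk1, hVjk, hmk⟩ := neg_extract j hVj
  have hk2 : 2 ≤ k := by omega
  have hτj : τ j = V j := by rw [fact_min j (by omega), min_eq_left (by omega)]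
  have hWdef : V (j + 1) = V j - d * V j := by rw [hV j, hτj]
  have hW1 : 1 ≤ V (j + 1) := by rw [hWdef]; nlinarith
  set W := V (j + 1) with hWW
  have hpk4 : (4:ℤ) ≤ (p:ℤ) ^ k := by
    calc (4:ℤ) = 2 ^ 2 := by norm_num
    _ ≤ 2 ^ k := pow_le_pow_right₀ one_le_two hk2
    _ ≤ (p:ℤ) ^ k := pow_le_pow_left₀ (by norm_num) (by exact_mod_cast hp2) k
  have hm3 : (3:ℤ) ≤ (m:ℤ) := by rcases hmk with h | h <;> omega
  have hm3' : (3:ℚ) ≤ (m:ℚ) := by exact_mod_cast hm3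
  rcases lt_trichotomy W (e:ℤ) with hWe | hWe | hWe
  · -- case W < e
    have hτ1 : τ (j + 1) = W := by rw [fact_min _ (by omega), min_eq_left (by omega)]
    have hE : (0:ℤ) ≤ (e:ℤ) - W := by omega
    set l := ((e:ℤ) - W).toNat with hl
    have hl1 : 1 ≤ l := by omega
    have hlk : l + 2 ≤ k := by omega
    have hcast : (p:ℚ) ^ ((e:ℤ) - W) = ((p ^ l : ℕ) : ℚ) := ppow_cast p _ hE
    have hml : (m:ℤ) = (p:ℤ) ^ l + 1 ∨ (m:ℤ) = (p:ℤ) ^ l - 1 := by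
      rcases heq (j + 1) with h | h
      · left
        have h2 := cancel_helper hP0 W (e:ℤ) (τ (j+1)) (m:ℚ) 1 (by rw [one_mul]; exact h)
        rw [hτ1, sub_self, zpow_zero, mul_one, hcast] at h2
        have : (m:ℚ) = ((p ^ l : ℕ) : ℚ) + 1 := by linarith
        exact_mod_cast this
      · right
        have h2 := cancel_helper hP0 W (e:ℤ) (τ (j+1)) (m:ℚ) (-1) (by rw [neg_one_mul]; exact h)
        rw [hτ1, sub_self, zpow_zero, mul_one, hcast] at h2
        have : (m:ℚ) = ((p ^ l : ℕ) : ℚ) - 1 := by linarith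
        exact_mod_cast this
    have hpl2 : (2:ℤ) ≤ (p:ℤ) ^ l := by
      calc (2:ℤ) = 2 ^ 1 := by norm_num
      _ ≤ 2 ^ l := pow_le_pow_right₀ one_le_two hl1
      _ ≤ (p:ℤ) ^ l := pow_le_pow_left₀ (by norm_num) (by exact_mod_cast hp2) l
    have hbig : (p:ℤ) ^ l * 4 ≤ (p:ℤ) ^ k := by
      have hp4 : (4:ℤ) ≤ (p:ℤ) ^ 2 := by
        have hpz : (2:ℤ) ≤ (p:ℤ) := by exact_mod_cast hp2
        nlinarith
      calc (p:ℤ) ^ l * 4 ≤ (p:ℤ) ^ l * (p:ℤ) ^ 2 := by nlinarith [hpl2, hp4]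
      _ = (p:ℤ) ^ (l + 2) := by ring
      _ ≤ (p:ℤ) ^ k := pow_le_pow_right₀ (by exact_mod_cast Nat.one_le_of_lt hp2) hlk
    rcases hmk with h1 | h1 <;> rcases hml with h2 | h2 <;> linarith
  · -- case W = e
    rcases heq (j + 1) with h | h
    · have h2 := cancel_helper hP0 W (e:ℤ) (τ (j+1)) (m:ℚ) 1 (by rw [one_mul]; exact h)
      rw [hWe, sub_self, zpow_zero, one_mul] at h2
      set μ : ℤ := τ (j + 1) - (e:ℤ) with hμ
      have hμ1 : 1 ≤ μ := by
        by_contra hc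
        push_neg at hc
        have h3 : (p:ℚ) ^ μ ≤ 1 := by
          calc (p:ℚ) ^ μ ≤ (p:ℚ) ^ (0:ℤ) := zpow_le_zpow_right₀ hP1 (by omega)
          _ = 1 := zpow_zero _
        linarith
      set μn := μ.toNat with hμn
      have hμcast : (p:ℚ) ^ μ = ((p ^ μn : ℕ) : ℚ) := ppow_cast p _ (by omega)
      have hmμ : (m:ℤ) = (p:ℤ) ^ μn + 1 := by
        rw [hμcast] at h2
        have : (m:ℚ) = ((p ^ μn : ℕ) : ℚ) + 1 := by linarith
        exact_mod_cast this
      have hτ1 : τ (j + 1) = μ + (e:ℤ) := by omega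
      have hV2 : V (j + 2) = W - d * (μ + (e:ℤ)) := by
        have := hV (j + 1)
        rw [hτ1] at this
        exact this
      rcases hmk with h1 | h1
      · -- m = p^k + 1 : μn = k
        have hppow : (p:ℤ) ^ μn = (p:ℤ) ^ k := by omega
        have hμk : μn = k := Nat.pow_right_injective hp2 (by exact_mod_cast hppow)
        have hμk' : μ = (k:ℤ) := by omega
        have hV2' : V (j + 2) = (e:ℤ) - d * ((k:ℤ) + (e:ℤ)) := by
          rw [hV2, hWe, hμk']
        have hV2neg : V (j + 2) < 0 := by rw [hV2']; nlinarith
        obtain ⟨k2, hk21, hk22, hmk2⟩ := neg_extract (j + 2) hV2neg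
        have hk2k : (k:ℤ) + 1 ≤ (k2:ℤ) := by
          have : (k2:ℤ) = (e:ℤ) + d * ((k:ℤ) + (e:ℤ)) - (e:ℤ) := by omega
          nlinarith
        have hk2k' : k + 1 ≤ k2 := by exact_mod_cast hk2k
        have hbig : (p:ℤ) ^ k * 2 ≤ (p:ℤ) ^ k2 := by
          calc (p:ℤ) ^ k * 2 ≤ (p:ℤ) ^ k * (p:ℤ) := by nlinarith [hpk4, (by exact_mod_cast hp2 : (2:ℤ) ≤ (p:ℤ))]
          _ = (p:ℤ) ^ (k + 1) := by ring
          _ ≤ (p:ℤ) ^ k2 := pow_le_pow_right₀ (by exact_mod_cast Nat.one_le_of_lt hp2) hk2k'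
        rcases hmk2 with h3 | h3 <;> linarith
      · -- m = p^k - 1 : forces p = 2, k = 2, e = 1, m = 3
        have hppow : (p:ℤ) ^ μn = (p:ℤ) ^ k - 2 := by omega
        have hpint : (2:ℤ) ≤ (p:ℤ) := by exact_mod_cast hp2
        have hμn1 : μn = 1 := by
          by_contra hc
          have hμn2 : 2 ≤ μn := by omega
          have d1 : (p:ℤ) ^ 2 ∣ (p:ℤ) ^ μn := pow_dvd_pow _ hμn2
          have d2 : (p:ℤ) ^ 2 ∣ (p:ℤ) ^ k := pow_dvd_pow _ hk2
          have d3 : (p:ℤ) ^ 2 ∣ ((p:ℤ) ^ k - (p:ℤ) ^ μn) := dvd_sub d2 d1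
          rw [hppow, sub_sub_cancel] at d3
          have := Int.le_of_dvd (by norm_num) d3
          nlinarith
        rw [hμn1, pow_one] at hppow
        -- hppow : p = p^k - 2
        have hpk2 : (p:ℤ) ^ 2 ≤ (p:ℤ) ^ k := pow_le_pow_right₀ (by linarith) hk2
        have hpeq2 : (p:ℤ) = 2 := by nlinarith
        have h2k4 : (p:ℤ) ^ k = 4 := by omega
        have hk2eq : k = 2 := by
          have hcast : (p:ℕ) ^ k = 2 ^ 2 := by
            have : ((p:ℕ):ℤ) ^ k = ((2:ℕ):ℤ) ^ 2 := by push_cast; omega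
            exact_mod_cast this
          have hp2n : p = 2 := by exact_mod_cast hpeq2
          rw [hp2n] at hcast
          exact Nat.pow_right_injective (le_refl 2) hcast
        have he1 : e = 1 := by omega
        have hμ2 : μ = 1 := by omega
        have hV2' : V (j + 2) = 1 - 2 * (d:ℤ) := by
          rw [hV2, hWe, he1, hμ2]
          push_cast
          ring
        have hV2neg : V (j + 2) < 0 := by rw [hV2']; nlinarith
        obtain ⟨k2, hk21, hk22, hmk2⟩ := neg_extract (j + 2) hV2neg
        have hk24 : 4 ≤ k2 := by
          rw [hV2'] at hk22
          omega
        have hm3eq : (m:ℤ) = 3 := by omega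
        have hbig : (16:ℤ) ≤ (p:ℤ) ^ k2 := by
          calc (16:ℤ) = 2 ^ 4 := by norm_num
          _ ≤ (p:ℤ) ^ 4 := pow_le_pow_left₀ (by norm_num) hpint 4
          _ ≤ (p:ℤ) ^ k2 := pow_le_pow_right₀ (by linarith) hk24
        rcases hmk2 with h3 | h3 <;> omega
    · -- second sign : (m-1) = -p^(...) impossible
      have h2 := cancel_helper hP0 W (e:ℤ) (τ (j+1)) (m:ℚ) (-1) (by rw [neg_one_mul]; exact h)
      rw [hWe, sub_self, zpow_zero, neg_one_mul] at h2
      have hpow_pos : (0:ℚ) < (p:ℚ) ^ (τ (j+1) - (e:ℤ)) := by positivity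
      nlinarith
  · -- case W > e
    rcases heq (j + 1) with h | h
    · have h2 := cancel_helper hP0 W (e:ℤ) (τ (j+1)) (m:ℚ) 1 (by rw [one_mul]; exact h)
      have hτ1 : τ (j + 1) = (e:ℤ) := by rw [fact_min _ (by omega), min_eq_right (by omega)]
      rw [hτ1, one_mul] at h2
      have h3 : (p:ℚ) ^ ((e:ℤ) - W) < 1 := by
        calc (p:ℚ) ^ ((e:ℤ) - W) ≤ (p:ℚ) ^ (-1:ℤ) := zpow_le_zpow_right₀ hP1 (by omega)
        _ < 1 := by
            rw [zpow_neg_one, inv_lt_one_iff₀]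
            right
            exact_mod_cast hp.one_lt
      linarith
    · have h2 := cancel_helper hP0 W (e:ℤ) (τ (j+1)) (m:ℚ) (-1) (by rw [neg_one_mul]; exact h)
      have hτ1 : τ (j + 1) = (e:ℤ) := by rw [fact_min _ (by omega), min_eq_right (by omega)]
      rw [hτ1, neg_one_mul] at h2
      have hpow_pos : (0:ℚ) < (p:ℚ) ^ ((e:ℤ) - W) := by positivity
      linarith


/-- The hard branch: cycles of `u ↦ u/(u - p^e)^d` on positive rationals have `u_i - p^e = ±1`. -/
theorem hard_branch (p : ℕ) (hp : p.Prime) (e d n : ℕ) (hd : 2 ≤ d) (hdeven : Even d)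
    (hn : 0 < n) (u : ℕ → ℚ) (hpos : ∀ i, 0 < u i)
    (hrec : ∀ i, u (i + 1) = u i / (u i - (p:ℚ) ^ e) ^ d)
    (hper : ∀ i, u (i + n) = u i) :
    ∀ i, u i - (p:ℚ) ^ e = 1 ∨ u i - (p:ℚ) ^ e = -1 := by
  haveI : Fact p.Prime := ⟨hp⟩
  have hP0 : (p:ℚ) ≠ 0 := by exact_mod_cast hp.ne_zero
  set c : ℚ := (p:ℚ) ^ e with hc
  have hc0 : c ≠ 0 := pow_ne_zero _ hP0
  have hu0 : ∀ i, u i ≠ 0 := fun i => (hpos i).ne'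
  have ht0 : ∀ i, u i - c ≠ 0 := by
    intro i h
    have := hrec i
    rw [h, zero_pow (by omega), div_zero] at this
    exact (hpos (i + 1)).ne' this
  have hvq : ∀ q : ℕ, q.Prime → q ≠ p →
      ∀ i, 0 ≤ padicValRat q (u i) ∧ padicValRat q (u i - c) = 0 := by
    intro q hq hne
    haveI : Fact q.Prime := ⟨hq⟩
    refine val0 q hq c hc0 ?_ d n hd hn u hpos hrec hper
    rw [hc, padicValRat.pow (p:ℚ), valq_p q p hq hne hp, mul_zero]
  rcases Nat.eq_zero_or_pos e with he0 | he1
  · -- e = 0 : all valuations of u i - c vanish, including at p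
    subst he0
    have hvp : ∀ i, padicValRat p (u i - c) = 0 := by
      intro i
      exact (val0 p hp c hc0 (by rw [hc, pow_zero]; exact padicValRat.one)
        d n hd hn u hpos hrec hper i).2
    intro i
    have := eq_ppow_of_vals p hp (u i - c) (ht0 i)
      (fun q hq hne => (hvq q hq hne i).2)
    rw [hvp i, zpow_zero] at this
    exact this
  · -- e ≥ 1
    set V : ℕ → ℤ := fun i => padicValRat p (u i) with hV
    set τ : ℕ → ℤ := fun i => padicValRat p (u i - c) with hτ
    have hs : ∀ i, u i - c = (p:ℚ) ^ (τ i) ∨ u i - c = -(p:ℚ) ^ (τ i) := by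
      intro i
      exact eq_ppow_of_vals p hp (u i - c) (ht0 i) (fun q hq hne => (hvq q hq hne i).2)
    have hVrec : ∀ i, V (i + 1) = V i - d * τ i := by
      intro i
      show padicValRat p (u (i + 1)) = _
      rw [hrec i, padicValRat.div (hu0 i) (pow_ne_zero _ (ht0 i)), padicValRat.pow (u i - c)]
    have htpow : ∀ i, (u i - c) ^ d = (p:ℚ) ^ (d * τ i) := by
      intro i
      have h1 : ((p:ℚ) ^ (τ i)) ^ d = (p:ℚ) ^ ((d:ℤ) * τ i) := by
        rw [← zpow_natCast ((p:ℚ) ^ (τ i)) d, ← zpow_mul, mul_comm]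
      rcases hs i with h | h <;> rw [h]
      · exact h1
      · rw [hdeven.neg_pow, h1]
    have hurec : ∀ i, u (i + 1) = u i * (p:ℚ) ^ (-(d * τ i) : ℤ) := by
      intro i
      rw [hrec i, htpow i, zpow_neg, div_eq_mul_inv]
    -- the prime-to-p part M is constant
    set M : ℚ := u 0 * (p:ℚ) ^ (-(V 0)) with hM
    have hMconst : ∀ i, u i * (p:ℚ) ^ (-(V i)) = M := by
      intro i
      induction i with
      | zero => rfl
      | succ i ih =>
        rw [← ih, hurec i, hVrec i, mul_assoc, ← zpow_add₀ hP0]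
        congr 2
        ring
    have hMpos : 0 < M := by
      rw [hM]
      have := hpos 0
      positivity
    have hMne : M ≠ 0 := hMpos.ne'
    have hvalM : ∀ q : ℕ, q.Prime → padicValRat q M = (if q = p then 0 else padicValRat q (u 0)) := by
      intro q hq
      haveI : Fact q.Prime := ⟨hq⟩
      rw [hM, padicValRat.mul (hu0 0) (zpow_ne_zero _ hP0), val_zpow q hP0]
      rcases eq_or_ne q p with rfl | hne
      · rw [if_pos rfl, padicValRat.self hp.one_lt]
        ring
      · rw [if_neg hne, valq_p q p hq hne hp]
        ring
    obtain ⟨m, hm1, hmp, hMm⟩ : ∃ m : ℕ, 1 ≤ m ∧ ¬ p ∣ m ∧ M = (m:ℚ) := by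
      have hden : M.den = 1 := by
        apply den_one_of_nonneg
        intro q hq
        rw [hvalM q hq]
        rcases eq_or_ne q p with rfl | hne
        · simp
        · rw [if_neg hne]
          exact (hvq q hq hne 0).1
      have hnum : 0 < M.num := Rat.num_pos.2 hMpos
      refine ⟨M.num.toNat, by omega, ?_, ?_⟩
      · intro hdvd
        have hvp : padicValRat p M = 0 := by rw [hvalM p hp, if_pos rfl]
        rw [padicValRat_def, hden] at hvp
        unfold padicValInt at hvp
        rw [padicValNat.one] at hvp
        have h1 : 1 ≤ padicValNat p M.num.natAbs := by
          haveI : Fact p.Prime := ⟨hp⟩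
          apply one_le_padicValNat_of_dvd (by omega)
          have hna : M.num.natAbs = M.num.toNat := by omega
          rwa [hna]
        omega
      · have : M = (M.num : ℚ) := by
          conv_lhs => rw [← M.num_div_den, hden]
          simp
        rw [this]
        exact_mod_cast (Int.toNat_of_nonneg hnum.le).symm
    have huM : ∀ i, u i = (m:ℚ) * (p:ℚ) ^ (V i) := by
      intro i
      have h1 := hMconst i
      rw [hMm] at h1
      have h2 : u i * (p:ℚ) ^ (-(V i)) * (p:ℚ) ^ (V i) = (m:ℚ) * (p:ℚ) ^ (V i) := by
        rw [h1]
      rwa [mul_assoc, ← zpow_add₀ hP0, neg_add_cancel, zpow_zero, mul_one] at h2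
    have heq : ∀ i, (m:ℚ) * (p:ℚ) ^ (V i) - (p:ℚ) ^ (e:ℤ) = (p:ℚ) ^ (τ i) ∨
        (m:ℚ) * (p:ℚ) ^ (V i) - (p:ℚ) ^ (e:ℤ) = -(p:ℚ) ^ (τ i) := by
      intro i
      have hce : (p:ℚ) ^ (e:ℤ) = c := by rw [hc, zpow_natCast]
      rw [hce, ← huM i]
      exact hs i
    have hnoneg : ∀ j, 0 ≤ τ j := by
      intro j
      by_contra hneg
      exact dio p hp e he1 d hd m hmp hm1 V τ heq hVrec j (by omega)
    have htele : ∀ i K, V (i + K) = V i - d * (Finset.range K).sum (fun k => τ (i + k)) := by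
      intro i K
      induction K with
      | zero => simp
      | succ K ih =>
        rw [Finset.sum_range_succ, show i + (K + 1) = i + K + 1 from rfl, hVrec (i + K), ih]
        ring
    have hτ0 : ∀ i, τ i = 0 := by
      intro i
      have hVper : V (i + n) = V i := by
        show padicValRat p (u (i + n)) = _
        rw [hper i]
      have hsum : (Finset.range n).sum (fun k => τ (i + k)) = 0 := by
        have h1 := htele i n
        rw [hVper] at h1
        have hd0 : (d:ℤ) ≠ 0 := by exact_mod_cast (by omega : d ≠ 0)
        have : (d:ℤ) * (Finset.range n).sum (fun k => τ (i + k)) = 0 := by linarith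
        exact (mul_eq_zero.mp this).resolve_left hd0
      have hall := (Finset.sum_eq_zero_iff_of_nonneg (fun k _ => hnoneg (i + k))).mp hsum
      have := hall 0 (Finset.mem_range.mpr hn)
      simpa using this
    intro i
    have := hs i
    rw [hτ0 i, zpow_zero] at this
    exact this


theorem cycle_w (p : ℕ) (hp : p.Prime) (d : ℕ) (hd : 2 ≤ d) (heven : Even d)
    (a : ℚ) (ha : a ≠ 0) (σ : ℚ) (hσ : σ = 1 ∨ σ = -1) (e : ℕ) (b : ℚ)
    (hb : b = σ * (p:ℚ) ^ e)
    (n : ℕ) (hn : 0 < n) (z : ℕ → ℚ) (hz : ∀ i, z i ≠ 0)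
    (hw : ∀ i, a * z i ^ d + b ≠ 0)
    (hrec : ∀ i, z (i + 1) = z i / (a * z i ^ d + b))
    (hper : ∀ i, z (i + n) = z i) :
    ∀ i, a * z i ^ d + b = 1 ∨ a * z i ^ d + b = -1 := by
  have hppos : (0:ℚ) < (p:ℚ) := by exact_mod_cast hp.pos
  have hpe1 : (1:ℚ) ≤ (p:ℚ) ^ e := one_le_pow₀ (by exact_mod_cast hp.one_lt.le)
  have hpepos : (0:ℚ) < (p:ℚ) ^ e := by positivity
  set u : ℕ → ℚ := fun i => |a| * z i ^ d with hu
  have hupos : ∀ i, 0 < u i := by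
    intro i
    have h1 : 0 < z i ^ d := heven.pow_pos (hz i)
    have h2 : 0 < |a| := abs_pos.mpr ha
    exact mul_pos h2 h1
  have huper : ∀ i, u (i + n) = u i := by
    intro i
    show |a| * z (i + n) ^ d = |a| * z i ^ d
    rw [hper i]
  have hurec : ∀ i, u (i + 1) = u i / (a * z i ^ d + b) ^ d := by
    intro i
    show |a| * z (i + 1) ^ d = _
    rw [hrec i, div_pow, mul_div_assoc]
  rcases ha.lt_or_gt with haneg | hapos <;> rcases hσ with hσ1 | hσ1
  · -- a < 0, σ = 1 : w = -(u - p^e), hard branch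
    have habs : |a| = -a := abs_of_neg haneg
    have hwi : ∀ i, a * z i ^ d + b = -(u i - (p:ℚ) ^ e) := by
      intro i
      show _ = -(|a| * z i ^ d - (p:ℚ) ^ e)
      rw [habs, hb, hσ1]
      ring
    have hurec' : ∀ i, u (i + 1) = u i / (u i - (p:ℚ) ^ e) ^ d := by
      intro i
      rw [hurec i, hwi i, heven.neg_pow]
    have := hard_branch p hp e d n hd heven hn u hupos hurec' huper
    intro i
    rcases this i with h | h
    · right; rw [hwi i, h]
    · left; rw [hwi i, h]; ring
  · -- a < 0, σ = -1 : w = -(u + p^e), easy branch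
    have habs : |a| = -a := abs_of_neg haneg
    have hwi : ∀ i, a * z i ^ d + b = -(u i + (p:ℚ) ^ e) := by
      intro i
      show _ = -(|a| * z i ^ d + (p:ℚ) ^ e)
      rw [habs, hb, hσ1]
      ring
    exfalso
    refine easy_branch ((p:ℚ) ^ e) hpe1 d n hd hn u hupos ?_ ?_
    · intro i
      rw [hurec i, hwi i, heven.neg_pow]
    · have := huper 0
      rwa [zero_add] at this
  · -- a > 0, σ = 1 : w = u + p^e, easy branch
    have habs : |a| = a := abs_of_pos hapos
    have hwi : ∀ i, a * z i ^ d + b = u i + (p:ℚ) ^ e := by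
      intro i
      show _ = |a| * z i ^ d + (p:ℚ) ^ e
      rw [habs, hb, hσ1]
      ring
    exfalso
    refine easy_branch ((p:ℚ) ^ e) hpe1 d n hd hn u hupos ?_ ?_
    · intro i
      rw [hurec i, hwi i]
    · have := huper 0
      rwa [zero_add] at this
  · -- a > 0, σ = -1 : w = u - p^e, hard branch
    have habs : |a| = a := abs_of_pos hapos
    have hwi : ∀ i, a * z i ^ d + b = u i - (p:ℚ) ^ e := by
      intro i
      show _ = |a| * z i ^ d - (p:ℚ) ^ e
      rw [habs, hb, hσ1]
      ring
    have hurec' : ∀ i, u (i + 1) = u i / (u i - (p:ℚ) ^ e) ^ d := by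
      intro i
      rw [hurec i, hwi i]
    have := hard_branch p hp e d n hd heven hn u hupos hurec' huper
    intro i
    rw [hwi i]
    exact this i


theorem key_lemma (p : ℕ) (hp : p.Prime) (d : ℕ) (hd : 2 ≤ d) (heven : Even d)
    (a : ℚ) (ha : a ≠ 0) (σ : ℚ) (hσ : σ = 1 ∨ σ = -1) (e : ℕ)
    (b : ℚ) (hb : b = σ * (p : ℚ) ^ e)
    (P : Option ℚ) (n : ℕ) (hn : 0 < n) (hper : (psi d a b)^[n] P = P) :
    psi d a b P = P ∨ (∃ z : ℚ, z ≠ 0 ∧ P = some z ∧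
      psi d a b (some z) = some (-z) ∧ psi d a b (some (-z)) = some z) := by
  set f := psi d a b with hf
  have hb0 : b ≠ 0 := by
    rw [hb]
    have hppos : (0:ℚ) < (p:ℚ) ^ e := by
      have : (0:ℚ) < (p:ℚ) := by exact_mod_cast hp.pos
      positivity
    rcases hσ with h | h <;> rw [h] <;> intro hc <;> nlinarith
  have hf0 : f (some 0) = some 0 := by
    show psi d a b (some 0) = some 0
    simp only [psi]
    rw [zero_pow (by omega), mul_zero, zero_add, if_neg hb0, zero_div]
  have habs : ∀ m, f^[m] (some 0) = some 0 := by
    intro m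
    induction m with
    | zero => rfl
    | succ m ih => rw [Function.iterate_succ_apply', ih, hf0]
  -- P = none is impossible
  rcases P with _ | z₀
  · exfalso
    have h1 : f^[n] none = some 0 := by
      obtain ⟨m, rfl⟩ : ∃ m, n = m + 1 := ⟨n - 1, by omega⟩
      rw [Function.iterate_succ_apply, show f none = some 0 from rfl, habs]
    rw [hper] at h1
    cases h1
  rcases eq_or_ne z₀ 0 with rfl | hz₀
  · left; exact hf0
  -- the orbit avoids none and 0
  have good : ∀ k, ∃ y, y ≠ 0 ∧ f^[k] (some z₀) = some y := by
    intro k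
    by_contra hbad
    have hk0 : f^[k + 1] (some z₀) = some 0 := by
      rw [Function.iterate_succ_apply']
      rcases hok : f^[k] (some z₀) with _ | y
      · rfl
      · rcases eq_or_ne y 0 with rfl | hy
        · exact hf0
        · exact absurd ⟨y, hy, hok⟩ hbad
    have habs2 : ∀ j, f^[j + (k + 1)] (some z₀) = some 0 := by
      intro j
      rw [Function.iterate_add_apply, hk0, habs]
    have hmul : f^[n * (k + 1)] (some z₀) = some z₀ :=
      (show Function.IsPeriodicPt f n (some z₀) from hper).mul_const (k + 1)
    have hge : n * (k + 1) = (n * (k + 1) - (k + 1)) + (k + 1) := by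
      have : k + 1 ≤ n * (k + 1) := Nat.le_mul_of_pos_left _ hn
      omega
    rw [hge, habs2] at hmul
    exact hz₀ (Option.some_injective _ hmul).symm
  choose zz hzz hzzeq using good
  have hz0 : zz 0 = z₀ := by
    have := hzzeq 0
    simp only [Function.iterate_zero_apply] at this
    exact (Option.some_injective _ this).symm
  have hstep : ∀ k, a * zz k ^ d + b ≠ 0 ∧ zz (k + 1) = zz k / (a * zz k ^ d + b) := by
    intro k
    have h1 : f^[k + 1] (some z₀) = f (some (zz k)) := by
      rw [Function.iterate_succ_apply', hzzeq k]
    rw [hzzeq (k + 1)] at h1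
    by_cases hc : a * zz k ^ d + b = 0
    · exfalso
      have : f (some (zz k)) = none := by
        show psi d a b (some (zz k)) = none
        simp only [psi]
        rw [if_pos hc]
      rw [this] at h1
      cases h1
    · refine ⟨hc, ?_⟩
      have : f (some (zz k)) = some (zz k / (a * zz k ^ d + b)) := by
        show psi d a b (some (zz k)) = _
        simp only [psi]
        rw [if_neg hc]
      rw [this] at h1
      exact Option.some_injective _ h1
  have hzper : ∀ i, zz (i + n) = zz i := by
    intro i
    have h1 : f^[i + n] (some z₀) = f^[i] (some z₀) := by
      rw [Function.iterate_add_apply, hper]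
    rw [hzzeq (i + n), hzzeq i] at h1
    exact Option.some_injective _ h1
  have hw1 := cycle_w p hp d hd heven a ha σ hσ e b hb n hn zz hzz
    (fun i => (hstep i).1) (fun i => (hstep i).2) hzper 0
  have hfP : f (some z₀) = some (zz 0 / (a * zz 0 ^ d + b)) := by
    have h1 : f^[1] (some z₀) = some (zz 1) := hzzeq 1
    rw [Function.iterate_one] at h1
    rw [h1, (hstep 0).2]
  rcases hw1 with h | h
  · left
    rw [hfP, h, div_one, hz0]
  · right
    refine ⟨z₀, hz₀, rfl, ?_, ?_⟩
    · rw [hfP, h, hz0, div_neg, div_one]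
    · show psi d a b (some (-z₀)) = some z₀
      simp only [psi]
      have hneg : a * (-z₀) ^ d + b = a * z₀ ^ d + b := by rw [heven.neg_pow]
      rw [hz0] at h
      rw [hneg, h]
      norm_num

/-- Fix a prime `p`, an even integer `d ≥ 2`, a nonzero rational `a`,
and `b = σ·p^e` with `σ ∈ {1,−1}` and `e ≥ 0`. Then every rational periodic cycle of
`ψ_{d,a,b}` has length at most `2`, and every cycle of length `2` consists of two
affine points `z` and `−z` (so `ψ(z) = −z` and `ψ(−z) = z`). -/
theorem periodic_cycles_even_degree
    (p : ℕ) (hp : p.Prime) (d : ℕ) (hd : 2 ≤ d) (heven : Even d)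
    (a : ℚ) (ha : a ≠ 0) (σ : ℚ) (hσ : σ = 1 ∨ σ = -1) (e : ℕ)
    (b : ℚ) (hb : b = σ * (p : ℚ) ^ e) :
    (∀ P : Option ℚ, (∃ n : ℕ, 0 < n ∧ (psi d a b)^[n] P = P) →
      Function.minimalPeriod (psi d a b) P = 1 ∨
        Function.minimalPeriod (psi d a b) P = 2) ∧
    (∀ P : Option ℚ, Function.minimalPeriod (psi d a b) P = 2 →
      ∃ z : ℚ, P = some z ∧ psi d a b (some z) = some (-z) ∧
        psi d a b (some (-z)) = some z) := by
  constructor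
  · intro P hP
    obtain ⟨n, hn, hper⟩ := hP
    rcases key_lemma p hp d hd heven a ha σ hσ e b hb P n hn hper with hfix | ⟨z, hz, rfl, h1, h2⟩
    · left
      exact Function.minimalPeriod_eq_one_iff_isFixedPt.mpr hfix
    · right
      have hne : psi d a b (some z) ≠ some z := by
        rw [h1]
        intro hc
        have := Option.some_injective _ hc
        apply hz
        linarith
      have hpp : Function.IsPeriodicPt (psi d a b) 2 (some z) := by
        show (psi d a b)^[2] (some z) = some z
        rw [show ((psi d a b)^[2] (some z)) = psi d a b (psi d a b (some z)) from rfl, h1, h2]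
      have hdvd := hpp.minimalPeriod_dvd
      rcases (Nat.dvd_prime Nat.prime_two).mp hdvd with h | h
      · exfalso
        exact hne (Function.minimalPeriod_eq_one_iff_isFixedPt.mp h)
      · exact h
  · intro P hmin
    have hpp : (psi d a b)^[2] P = P := by
      rw [← hmin]
      exact Function.iterate_minimalPeriod
    rcases key_lemma p hp d hd heven a ha σ hσ e b hb P 2 (by norm_num) hpp with
      hfix | ⟨z, hz, hPz, h1, h2⟩
    · exfalso
      have := Function.minimalPeriod_eq_one_iff_isFixedPt.mpr hfix
      omega
    · exact ⟨z, hPz, h1, h2⟩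
end

section
/- Let p be a prime, d ≥ 3 an integer, and b = σ·p^e with σ ∈ {1, −1} and e ≥ 1 an integer. Then the polynomial b·w^d + w − b has no rational root. -/
lemma key_int (p : ℕ) (hp : p.Prime) (c e : ℕ) (he : 1 ≤ e)
    (B n m : ℤ) (hB : B.natAbs = p ^ e) (hm : 0 < m)
    (hcop : IsCoprime n m)
    (hE : B * n ^ (c+3) + n * m ^ (c+2) = B * m ^ (c+3)) : False := by
  have hp2 : (2:ℤ) ≤ p := by exact_mod_cast hp.two_le
  have habsB : |B| = (p:ℤ) ^ e := by
    rw [Int.abs_eq_natAbs, hB]; push_cast; ring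
  have hB2 : 2 ≤ |B| := by
    rw [habsB]
    calc (2:ℤ) ≤ p := hp2
    _ = (p:ℤ)^1 := (pow_one _).symm
    _ ≤ (p:ℤ)^e := pow_le_pow_right₀ (by linarith) he
  have hB0 : B ≠ 0 := by
    intro h; rw [h] at hB2; simp at hB2
  have hnB : n ∣ B := by
    have h1 : n ∣ B * m ^ (c+3) := by
      rw [← hE]
      exact dvd_add (Dvd.dvd.mul_left (dvd_pow_self n (by omega)) B) (dvd_mul_right n _)
    exact (hcop.pow_right).dvd_of_dvd_mul_right h1
  have hmB : m ∣ B := by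
    have h1 : m ∣ B * n ^ (c+3) := by
      have h2 : B * n ^ (c+3) = B * m ^ (c+3) - n * m ^ (c+2) := by linarith
      rw [h2]
      exact dvd_sub (Dvd.dvd.mul_left (dvd_pow_self m (by omega)) B)
        (Dvd.dvd.mul_left (dvd_pow_self m (by omega)) n)
    exact (hcop.symm.pow_right).dvd_of_dvd_mul_right h1
  have hmdvd : m.natAbs ∣ p ^ e := hB ▸ Int.natAbs_dvd_natAbs.mpr hmB
  have hndvd : n.natAbs ∣ p ^ e := hB ▸ Int.natAbs_dvd_natAbs.mpr hnB
  have hn0 : n ≠ 0 := by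
    intro h
    rw [h] at hE
    simp at hE
    rcases hE with h1 | h1
    · exact hB0 h1
    · have : (0:ℤ) < m ^ (c+3) := pow_pos hm _
      omega
  by_cases hm1 : m = 1
  · -- w is an integer n
    subst hm1
    simp only [one_pow, mul_one] at hE
    -- hE : B * n ^ (c+3) + n = B
    have h2 : n = B * (1 - n ^ (c+3)) := by linear_combination hE
    have habs : |n| = |B| * |1 - n ^ (c+3)| := by
      conv_lhs => rw [h2]
      rw [abs_mul]
    have hc1 : 1 ≤ |1 - n ^ (c+3)| := by
      rcases eq_or_ne (n ^ (c+3)) 1 with h | h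
      · exfalso
        apply hn0
        have h3 : B * 1 + n = B := h ▸ hE
        linarith
      · exact Int.one_le_abs (by omega)
    have ha2 : 2 ≤ |n| := by
      calc (2:ℤ) = 2 * 1 := by ring
      _ ≤ |B| * |1 - n ^ (c+3)| := by
          apply mul_le_mul hB2 hc1 (by norm_num) (by linarith)
      _ = |n| := habs.symm
    have hub : |1 - n ^ (c+3)| ≥ |n| ^ (c+3) - 1 := by
      calc |1 - n ^ (c+3)| ≥ |n ^ (c+3)| - |1| := by
            have := abs_sub_abs_le_abs_sub (n ^ (c+3)) 1
            rw [abs_sub_comm] at this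
            linarith
      _ = |n| ^ (c+3) - 1 := by rw [abs_pow, abs_one]
    have hpow3 : |n| ^ (c+3) ≥ |n| ^ 3 := pow_le_pow_right₀ (by linarith) (by omega)
    have hnn : |n| ≥ 2 * (|n| ^ (c+3) - 1) := by
      calc |n| = |B| * |1 - n ^ (c+3)| := habs
      _ ≥ 2 * |1 - n ^ (c+3)| := by
          apply mul_le_mul_of_nonneg_right hB2 (by positivity)
      _ ≥ 2 * (|n| ^ (c+3) - 1) := by linarith
    nlinarith [sq_nonneg (|n| - 2), sq_nonneg |n|, ha2]
  · -- p ∣ m, so n = ±1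
    have hmn1 : m.natAbs ≠ 1 := by
      intro h
      have h' : m = 1 ∨ m = -1 := Int.natAbs_eq_iff.mp (by simpa using h) |>.imp (by simp) (by simp)
      rcases h' with h' | h'
      · exact hm1 h'
      · omega
    obtain ⟨k, hk, hmk⟩ := (Nat.dvd_prime_pow hp).mp hmdvd
    obtain ⟨j, hj, hnj⟩ := (Nat.dvd_prime_pow hp).mp hndvd
    have hk0 : k ≠ 0 := by intro h; rw [h] at hmk; simp at hmk; exact hmn1 hmk
    have hcopnat : Nat.gcd n.natAbs m.natAbs = 1 := Int.isCoprime_iff_gcd_eq_one.mp hcop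
    have hpnat : 2 ≤ p := hp.two_le
    have hj0 : j = 0 := by
      by_contra hj0
      have h1 : p ∣ n.natAbs := hnj ▸ dvd_pow_self p hj0
      have h2 : p ∣ m.natAbs := hmk ▸ dvd_pow_self p hk0
      have h3 : p ∣ 1 := hcopnat ▸ Nat.dvd_gcd h1 h2
      have := Nat.le_of_dvd one_pos h3
      omega
    have hn1 : |n| = 1 := by
      rw [Int.abs_eq_natAbs, hnj, hj0]; simp
    have hm2 : 2 ≤ m := by
      have h2 : p ∣ m.natAbs := hmk ▸ dvd_pow_self p hk0
      have h3 : p ≤ m.natAbs := Nat.le_of_dvd (by positivity) h2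
      have hpm : (p:ℤ) ≤ (m.natAbs:ℤ) := by exact_mod_cast h3
      rw [Int.natAbs_of_nonneg hm.le] at hpm
      linarith
    have h2 : n * m ^ (c+2) = B * (m ^ (c+3) - n ^ (c+3)) := by linear_combination hE
    have habs : m ^ (c+2) = |B| * |m ^ (c+3) - n ^ (c+3)| := by
      have h3 : |n * m ^ (c+2)| = |B| * |m ^ (c+3) - n ^ (c+3)| := by
        conv_lhs => rw [h2]
        rw [abs_mul]
      rw [abs_mul, hn1, one_mul, abs_pow, abs_of_pos hm] at h3
      exact h3
    have hub : |m ^ (c+3) - n ^ (c+3)| ≥ m ^ (c+3) - 1 := by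
      have h1 := abs_sub_abs_le_abs_sub (m ^ (c+3)) (n ^ (c+3))
      rw [abs_pow, abs_of_pos hm, abs_pow, hn1, one_pow] at h1
      linarith [le_abs_self (m ^ (c+3) - n ^ (c+3))]
    have hpowpos : (0:ℤ) < m ^ (c+2) := pow_pos hm _
    have hmd : m ^ (c+3) = m * m ^ (c+2) := by ring
    nlinarith [habs, hub, hB2, abs_nonneg (m ^ (c+3) - n ^ (c+3))]

/-- Let `p` be a prime, `d ≥ 3`, and `b = σ·p^e` with
`σ ∈ {1,−1}` and `e ≥ 1`. Then the polynomial `b·w^d + w − b` has no rational root. -/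
theorem no_rational_root_b_poly
    (p : ℕ) (hp : p.Prime) (d : ℕ) (hd : 3 ≤ d)
    (σ : ℚ) (hσ : σ = 1 ∨ σ = -1) (e : ℕ) (he : 1 ≤ e)
    (b : ℚ) (hb : b = σ * (p : ℚ) ^ e) :
    ∀ w : ℚ, b * w ^ d + w - b ≠ 0 := by
  intro w hw
  obtain ⟨c, rfl⟩ : ∃ c, d = c + 3 := ⟨d - 3, by omega⟩
  obtain ⟨B, hBb, hBnat⟩ : ∃ B : ℤ, (B:ℚ) = b ∧ B.natAbs = p ^ e := by
    rcases hσ with h | h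
    · exact ⟨(p:ℤ)^e, by rw [hb, h]; push_cast; ring, by rw [Int.natAbs_pow]; simp⟩
    · exact ⟨-((p:ℤ)^e), by rw [hb, h]; push_cast; ring, by simp [Int.natAbs_pow]⟩
  obtain ⟨n, m, hm, hcop, hwn⟩ : ∃ (n m : ℤ), 0 < m ∧ IsCoprime n m ∧ w = (n:ℚ) / (m:ℚ) := by
    refine ⟨w.num, (w.den : ℤ), by exact_mod_cast w.pos, ?_, ?_⟩
    · rw [Int.isCoprime_iff_gcd_eq_one]
      exact w.reduced
    · exact_mod_cast (Rat.num_div_den w).symm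
  rw [hwn] at hw
  have hm0 : (m:ℚ) ≠ 0 := Int.cast_ne_zero.mpr hm.ne'
  have hE : B * n ^ (c+3) + n * m ^ (c+2) = B * m ^ (c+3) := by
    have h0 : ((B * n ^ (c+3) + n * m ^ (c+2) - B * m ^ (c+3) : ℤ) : ℚ)
        = (m:ℚ)^(c+3) * (b * ((n:ℚ)/(m:ℚ)) ^ (c+3) + (n:ℚ)/(m:ℚ) - b) := by
      rw [← hBb]
      push_cast
      rw [div_pow]
      field_simp
      ring
    rw [hw, mul_zero] at h0
    have : (B * n ^ (c+3) + n * m ^ (c+2) - B * m ^ (c+3) : ℤ) = 0 := by exact_mod_cast h0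
    linarith
  exact key_int p hp c e he B n m hBnat hm hcop hE
end

section
/- Let p be a prime, d ≥ 3 an integer, and b = σ·p^e with σ ∈ {1, −1} and e ≥ 1 an integer. Then the only rational root that the polynomial (b−1)·w^d + w − b can have is w = 1; that is, every w ∈ ℚ with (b−1)·w^d + w − b = 0 satisfies w = 1. -/
private lemma aux_gap (u v : ℤ) (hv : 1 ≤ v) (huv : v < u) {d : ℕ} (hd : 3 ≤ d) :
    u + v < u ^ d - v ^ d := by
  have hu : 2 ≤ u := by omega
  have h1 : v ^ (d-1) ≤ u ^ (d-1) := pow_le_pow_left₀ (by omega) (le_of_lt huv) _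
  have h2 : u ^ 2 ≤ u ^ (d-1) := pow_le_pow_right₀ (by omega) (by omega)
  have hud : u ^ d = u ^ (d-1) * u := by rw [← pow_succ]; congr 1; omega
  have hvd : v ^ d = v ^ (d-1) * v := by rw [← pow_succ]; congr 1; omega
  have h3 : 0 < v ^ (d-1) := pow_pos (by omega) _
  nlinarith [h1, h2, h3]

/-- Let `p` be a prime, `d ≥ 3`, and `b = σ·p^e` with
`σ ∈ {1,−1}` and `e ≥ 1`. Then the only possible rational root of the polynomial
`(b−1)·w^d + w − b` is `w = 1`. -/
theorem rational_root_b_sub_one_poly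
    (p : ℕ) (hp : p.Prime) (d : ℕ) (hd : 3 ≤ d)
    (σ : ℚ) (hσ : σ = 1 ∨ σ = -1) (e : ℕ) (he : 1 ≤ e)
    (b : ℚ) (hb : b = σ * (p : ℚ) ^ e) :
    ∀ w : ℚ, (b - 1) * w ^ d + w - b = 0 → w = 1 := by
  intro w hroot
  by_contra hw1
  obtain ⟨d', rfl⟩ : ∃ d', d = d' + 1 := ⟨d - 1, by omega⟩
  have hd' : 2 ≤ d' := by omega
  -- b is a nonzero integer
  obtain ⟨B, hB, hB0⟩ : ∃ B : ℤ, (B : ℚ) = b ∧ B ≠ 0 := by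
    have hpz : (p:ℤ) ^ e ≠ 0 := pow_ne_zero _ (by exact_mod_cast hp.pos.ne')
    rcases hσ with h | h
    · exact ⟨(p:ℤ)^e, by rw [hb, h]; push_cast; ring, hpz⟩
    · exact ⟨-((p:ℤ)^e), by rw [hb, h]; push_cast; ring, by simpa using hpz⟩
  have hw0 : w ≠ 0 := by
    rintro rfl
    rw [zero_pow (by omega : d' + 1 ≠ 0)] at hroot
    apply hB0
    have hb0 : b = 0 := by linarith
    exact_mod_cast hB.trans hb0
  set r : ℤ := w.num with hr
  set s : ℤ := (w.den : ℤ) with hs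
  have hs1 : 1 ≤ s := by
    have h1 : 1 ≤ w.den := w.pos
    rw [hs]
    exact_mod_cast h1
  have hsq : (s : ℚ) ≠ 0 := by
    have : (0:ℤ) < s := by omega
    exact_mod_cast this.ne'
  have hcop : IsCoprime r s := Int.isCoprime_iff_gcd_eq_one.mpr w.reduced
  have hwq : (w : ℚ) = (r : ℚ) / (s : ℚ) := by exact_mod_cast (Rat.num_div_den w).symm
  -- integer form of the root equation
  have key : (B - 1) * r ^ (d'+1) + r * s ^ d' - B * s ^ (d'+1) = 0 := by
    have h2 : (((B - 1) * r ^ (d'+1) + r * s ^ d' - B * s ^ (d'+1) : ℤ) : ℚ)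
        = ((b - 1) * w ^ (d'+1) + w - b) * (s:ℚ) ^ (d'+1) := by
      rw [hwq, ← hB]
      push_cast
      rw [div_pow]
      field_simp
      ring
    have h3 : (((B - 1) * r ^ (d'+1) + r * s ^ d' - B * s ^ (d'+1) : ℤ) : ℚ) = 0 := by
      rw [h2, hroot, zero_mul]
    exact_mod_cast h3
  -- geometric sum
  set T : ℤ := ∑ i ∈ Finset.range (d'+1), r ^ i * s ^ (d' + 1 - 1 - i) with hT
  have geom : T * (r - s) = r ^ (d'+1) - s ^ (d'+1) := geom_sum₂_mul r s (d'+1)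
  have hrs : r ≠ s := by
    intro h
    apply hw1
    rw [hwq, h]
    exact div_self hsq
  have hQ : (B - 1) * T = -s ^ d' := by
    have hfac : (r - s) * ((B - 1) * T + s ^ d') = 0 := by
      linear_combination (B - 1) * geom + key
    rcases mul_eq_zero.mp hfac with h | h
    · exact absurd (sub_eq_zero.mp h) hrs
    · linarith
  -- T is coprime to s
  have hTs : IsCoprime T s := by
    have hsplit : T = (∑ i ∈ Finset.range d', r ^ i * s ^ (d' - i)) + r ^ d' := by
      rw [hT, Finset.sum_range_succ]
      simp only [Nat.add_sub_cancel, Nat.sub_self, pow_zero, mul_one]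
    obtain ⟨k, hk⟩ : s ∣ ∑ i ∈ Finset.range d', r ^ i * s ^ (d' - i) := by
      apply Finset.dvd_sum
      intro i hi
      exact dvd_mul_of_dvd_right (dvd_pow_self s (by simp at hi; omega)) _
    rw [hsplit, hk, add_comm]
    exact (hcop.pow_left).add_mul_left_left k
  -- hence T is a unit
  have hTu : IsUnit T := by
    refine (hTs.pow_right (n := d')).isUnit_of_dvd' dvd_rfl ⟨-(B-1), ?_⟩
    linarith [hQ]
  have hT1 : T = 1 ∨ T = -1 := Int.isUnit_iff.mp hTu
  rcases lt_trichotomy r 0 with hrneg | hr0 | hrpos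
  · -- r < 0
    set a : ℤ := -r with haa
    have ha : 1 ≤ a := by omega
    have hra : r = -a := by omega
    rcases Nat.even_or_odd (d'+1) with hde | hdo
    · -- d even
      have hrd : r ^ (d'+1) = a ^ (d'+1) := by rw [hra]; exact hde.neg_pow a
      rcases lt_trichotomy a s with h | h | h
      · have hgap : s + a < s ^ (d'+1) - a ^ (d'+1) := aux_gap s a ha h (by omega)
        have hle : a ^ (d'+1) ≤ s ^ (d'+1) := pow_le_pow_left₀ (by omega) (le_of_lt h) _
        rcases hT1 with h1 | h1 <;> rw [h1] at geom <;> rw [hrd] at geom <;> linarith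
      · -- a = s forces r = -1, s = 1
        have hsu : IsUnit s := hcop.isUnit_of_dvd' ⟨-1, by omega⟩ dvd_rfl
        have hs1' : s = 1 := by rcases Int.isUnit_iff.mp hsu with h2 | h2 <;> omega
        have ha1 : a = 1 := by omega
        rw [hrd, ha1, hs1'] at geom
        simp at geom
        rcases hT1 with h1 | h1 <;> rw [h1] at geom <;> omega
      · have hgap : a + s < a ^ (d'+1) - s ^ (d'+1) := aux_gap a s hs1 h (by omega)
        rcases hT1 with h1 | h1 <;> rw [h1] at geom <;> rw [hrd] at geom <;> linarith
    · -- d odd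
      have hrd : r ^ (d'+1) = -a ^ (d'+1) := by rw [hra]; exact hdo.neg_pow a
      rw [hrd] at geom
      have hap : 1 ≤ a ^ (d'+1) := one_le_pow₀ ha
      have hsp : 1 ≤ s ^ (d'+1) := one_le_pow₀ hs1
      rcases hT1 with h1 | h1 <;> rw [h1] at geom
      · -- a + s = a^d + s^d forces a = s = 1
        have hale : a ≤ a ^ (d'+1) := le_self_pow₀ ha (by omega)
        have hsle : s ≤ s ^ (d'+1) := le_self_pow₀ hs1 (by omega)
        have haeq : a ^ (d'+1) = a := by linarith
        have hseq : s ^ (d'+1) = s := by linarith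
        have ha2 : a ^ 2 ≤ a ^ (d'+1) := pow_le_pow_right₀ ha (by omega)
        have hss2 : s ^ 2 ≤ s ^ (d'+1) := pow_le_pow_right₀ hs1 (by omega)
        have ha1 : a = 1 := by nlinarith
        have hs1'' : s = 1 := by nlinarith
        rw [h1, hs1''] at hQ
        simp at hQ
        omega
      · linarith
  · exact hw0 (Rat.num_eq_zero.mp (by rw [← hr, hr0]))
  · -- r ≥ 1 : T ≥ d ≥ 3
    have hTd : (d' + 1 : ℤ) ≤ T := by
      rw [hT]
      calc (d' + 1 : ℤ) = ∑ i ∈ Finset.range (d'+1), (1:ℤ) := by simp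
      _ ≤ _ := by
          apply Finset.sum_le_sum
          intro i hi
          exact one_le_mul_of_one_le_of_one_le (one_le_pow₀ (by omega)) (one_le_pow₀ hs1)
    omega
end

section
/- Let p be a prime, d ≥ 4 an even integer, and b = σ·p^e with σ ∈ {1, −1} and e ≥ 1 an integer. Then the only rational root that the polynomial (b+1)·w^d + w − b can have is w = −1; that is, every w ∈ ℚ with (b+1)·w^d + w − b = 0 satisfies w = −1. -/
/-- Let `p` be a prime, `d ≥ 4` even, and `b = σ·p^e` with
`σ ∈ {1,−1}` and `e ≥ 1`. Then the only possible rational root of the polynomial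
`(b+1)·w^d + w − b` is `w = −1`. -/
theorem rational_root_b_add_one_poly
    (p : ℕ) (hp : p.Prime) (d : ℕ) (hd : 4 ≤ d) (heven : Even d)
    (σ : ℚ) (hσ : σ = 1 ∨ σ = -1) (e : ℕ) (he : 1 ≤ e)
    (b : ℚ) (hb : b = σ * (p : ℚ) ^ e) :
    ∀ w : ℚ, (b + 1) * w ^ d + w - b = 0 → w = -1 := by
  intro w h
  obtain ⟨c, rfl⟩ : ∃ c, d = c + 1 := ⟨d - 1, by omega⟩
  have hc : 3 ≤ c := by omega
  set P : ℤ := (p : ℤ) ^ e with hPdef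
  clear_value P
  have hp2 : (2 : ℤ) ≤ (p : ℤ) := by exact_mod_cast hp.two_le
  have hP2 : (2 : ℤ) ≤ P := by
    calc (2:ℤ) = 2^1 := by ring
    _ ≤ (p:ℤ)^1 := by gcongr <;> norm_num
    _ ≤ (p:ℤ)^e := pow_le_pow_right₀ (by linarith) he
    _ = P := hPdef.symm
  -- integer B with b = B
  obtain ⟨B, hBQ, hBval⟩ : ∃ B : ℤ, b = (B:ℚ) ∧ (B = P ∨ B = -P) := by
    rcases hσ with h1 | h1
    · exact ⟨P, by rw [hb, h1]; push_cast [hPdef]; ring, Or.inl rfl⟩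
    · exact ⟨-P, by rw [hb, h1]; push_cast [hPdef]; ring, Or.inr rfl⟩
  set m : ℤ := w.num with hm
  set n : ℤ := (w.den : ℤ) with hn
  have hn1 : 1 ≤ n := by
    rw [hn]; exact_mod_cast w.den_pos
  have hcop0 : IsCoprime m n := by
    rw [Int.isCoprime_iff_gcd_eq_one]
    simpa [Int.gcd, hm, hn] using w.reduced
  have hnq : (n:ℚ) ≠ 0 := by
    have : (0:ℤ) < n := by linarith
    exact_mod_cast this.ne'
  have hwmn : (m:ℚ) = w * n := by
    have h0 := Rat.num_div_den w
    rw [hm, hn]; push_cast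
    field_simp [show ((w.den:ℚ)) ≠ 0 from by exact_mod_cast w.den_pos.ne'] at h0 ⊢
    exact h0

  -- integer equation
  have key : (B+1)*m^(c+1) + m*n^c - B*n^(c+1) = 0 := by
    have h2 : ((B:ℚ)+1)*(m:ℚ)^(c+1) + (m:ℚ)*(n:ℚ)^c - (B:ℚ)*(n:ℚ)^(c+1) = 0 := by
      rw [hwmn]
      rw [hBQ] at h
      linear_combination (n:ℚ)^(c+1) * h
    exact_mod_cast h2
  clear_value m n
  have hcop : IsCoprime m n := hcop0
  have hB1ne : B + 1 ≠ 0 := by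
    rcases hBval with h1 | h1 <;> omega
  -- rational root theorem consequences
  have hmB : m ∣ B := by
    have h1 : m ∣ B * n ^ (c+1) := by
      have heq : B * n ^ (c+1) = (B+1) * m^(c+1) + m * n^c := by linarith
      rw [heq]
      exact dvd_add ((dvd_pow_self m (Nat.succ_ne_zero c)).mul_left _) (dvd_mul_right m _)
    exact (hcop.pow_right).dvd_of_dvd_mul_right h1
  have hnB1 : n ∣ B + 1 := by
    have h1 : n ∣ (B+1) * m ^ (c+1) := by
      have heq : (B+1) * m^(c+1) = B * n^(c+1) - m * n^c := by linarith
      rw [heq]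
      refine dvd_sub ((dvd_pow_self n (Nat.succ_ne_zero c)).mul_left _) ?_
      exact ((dvd_pow_self n (by omega : c ≠ 0)).mul_left m)
    exact (hcop.symm.pow_right).dvd_of_dvd_mul_right h1
  have hmabs : m.natAbs ∣ p ^ e := by
    have h1 : m.natAbs ∣ B.natAbs := Int.natAbs_dvd_natAbs.mpr hmB
    rcases hBval with h2 | h2 <;>
      simpa [h2, hPdef, Int.natAbs_pow, Int.natAbs_neg] using h1
  obtain ⟨k, hke, hmk⟩ := (Nat.dvd_prime_pow hp).mp hmabs
  have hpprime : Prime (p:ℤ) := Nat.prime_iff_prime_int.mp hp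
  by_cases hk0 : k = 0
  · -- |m| = 1
    subst hk0
    have hm1 : m = 1 ∨ m = -1 := by
      rw [pow_zero] at hmk
      rcases Int.natAbs_eq m with h1 | h1 <;> rw [hmk] at h1 <;> simp [h1]
    have hmpow : m ^ (c+1) = 1 := by
      rcases hm1 with h1 | h1 <;> rw [h1]
      · exact one_pow _
      · exact heven.neg_one_pow
    rw [hmpow, mul_one] at key
    by_cases hne : n = 1
    · -- then m = -1 and w = -1
      rw [hne] at key
      simp only [one_pow, mul_one] at key
      have hm' : m = -1 := by linarith
      have hw : w = (m:ℚ) / (n:ℚ) := by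
        rw [hm, hn]; exact (Rat.num_div_den w).symm
      rw [hw, hm', hne]; norm_num
    · exfalso
      have hn2 : 2 ≤ n := by omega
      have hN : (8:ℤ) ≤ n ^ c := by
        calc (8:ℤ) = 2 ^ 3 := by norm_num
        _ ≤ 2 ^ c := pow_le_pow_right₀ (by norm_num) hc
        _ ≤ n ^ c := pow_le_pow_left₀ (by norm_num) hn2 c
      have hNc : n ^ (c+1) = n * n ^ c := by rw [pow_succ]; ring
      rw [hNc] at key
      set N : ℤ := n ^ c with hNdef
      have hnN : 16 ≤ n * N := by nlinarith
      have h16 : 16 * P ≤ P * (n * N) := by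
        have := mul_le_mul_of_nonneg_left hnN (by linarith : (0:ℤ) ≤ P)
        linarith
      have h4N : 4 * N ≤ P * (n * N) := by
        have h1 : 2 * N ≤ n * N := by nlinarith
        have h2 : 2 * (n * N) ≤ P * (n * N) := mul_le_mul_of_nonneg_right hP2 (by nlinarith)
        linarith
      rcases hBval with h2 | h2 <;> rcases hm1 with h3 | h3 <;>
        (subst h2; rw [h3] at key) <;> linarith [key, hN, hn2, hP2, h16, h4N]
  · by_cases hkee : k = e
    · -- |m| = p^e : the case m = ±P
      exfalso
      subst hkee
      obtain ⟨ε, hε, hmP⟩ : ∃ ε : ℤ, (ε = 1 ∨ ε = -1) ∧ m = ε * P := by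
        rcases Int.natAbs_eq m with h1 | h1 <;> rw [hmk] at h1
        · exact ⟨1, Or.inl rfl, by rw [h1]; push_cast [hPdef]; ring⟩
        · exact ⟨-1, Or.inr rfl, by rw [h1]; push_cast [hPdef]; ring⟩
      obtain ⟨s, hs, hBP⟩ : ∃ s : ℤ, (s = 1 ∨ s = -1) ∧ B = s * P := by
        rcases hBval with h1 | h1
        · exact ⟨1, Or.inl rfl, by rw [h1]; ring⟩
        · exact ⟨-1, Or.inr rfl, by rw [h1]; ring⟩
      have hεpow : ε ^ (c+1) = 1 := by
        rcases hε with h1 | h1 <;> rw [h1]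
        · exact one_pow _
        · exact heven.neg_one_pow
      have hPne : P ≠ 0 := by linarith
      have expand : (ε * P) ^ (c+1) = P ^ c * P := by
        rw [mul_pow, hεpow, one_mul, pow_succ]
      rw [hmP, hBP] at key
      have key2 : n ^ c * (s * n - ε) = (B + 1) * P ^ c := by
        rw [hBP]
        apply mul_left_cancel₀ hPne
        linear_combination -key + (s*P+1) * expand
      have hBB1 : IsCoprime P (B + 1) := by
        rcases hs with h1 | h1 <;> subst h1 <;> rw [hBP]
        · exact ⟨-1, 1, by ring⟩
        · exact ⟨1, 1, by ring⟩
      have hnP : IsCoprime (P ^ c) (n ^ c) :=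
        (hBB1.of_isCoprime_of_dvd_right hnB1).pow
      have hdvd : P ^ c ∣ s * n - ε := by
        have h1 : P ^ c ∣ n ^ c * (s * n - ε) := by
          rw [key2]; exact dvd_mul_left _ _
        exact hnP.dvd_of_dvd_mul_left h1
      have hnle : n ≤ P + 1 := by
        have h1 : n ∣ |B + 1| := (dvd_abs n (B+1)).mpr hnB1
        have h2 : n ≤ |B + 1| := Int.le_of_dvd (abs_pos.mpr hB1ne) h1
        rcases hBval with h3 | h3 <;> subst h3
        · rw [abs_of_nonneg (by linarith)] at h2; linarith
        · rw [abs_of_nonpos (by linarith)] at h2; linarith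
      have habs : |s * n - ε| ≤ P + 2 := by
        rcases hs with h1 | h1 <;> rcases hε with h2 | h2 <;> subst h1 <;> subst h2 <;>
          apply abs_le.mpr <;> constructor <;> linarith
      have hP3 : P + 2 < P ^ c := by
        have h4 : (4:ℤ) ≤ P * P := by nlinarith
        have hPP : 4 * P ≤ P * P * P := by nlinarith
        have h1 : P + 2 < P ^ 3 := by
          rw [show P ^ 3 = P * P * P from by ring]; linarith
        have h2 : P ^ 3 ≤ P ^ c := pow_le_pow_right₀ (by linarith) hc
        linarith
      have hzero : s * n - ε = 0 :=
        Int.eq_zero_of_abs_lt_dvd hdvd (lt_of_le_of_lt habs hP3)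
      rw [hzero, mul_zero] at key2
      have : B + 1 = 0 := by
        have hPc : P ^ c ≠ 0 := pow_ne_zero c hPne
        exact (mul_eq_zero.mp key2.symm).resolve_right hPc
      exact hB1ne this
    · -- 1 ≤ k < e
      exfalso
      have hklt : k < e := lt_of_le_of_ne hke hkee
      have hk1 : 1 ≤ k := by omega
      have hpkm : (p:ℤ) ^ k ∣ m := by
        have : ((m.natAbs : ℤ)) ∣ m := Int.natAbs_dvd.mpr dvd_rfl
        rwa [hmk, Nat.cast_pow] at this
      have hpm : (p:ℤ) ∣ m := dvd_trans (dvd_pow_self _ (by omega : k ≠ 0)) hpkm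
      have hk1B : (p:ℤ) ^ (k+1) ∣ B := by
        have h1 : (p:ℤ) ^ (k+1) ∣ P := by
          rw [hPdef]; exact pow_dvd_pow _ (by omega)
        rcases hBval with h2 | h2 <;> subst h2
        · exact h1
        · exact h1.neg_right
      have hk1m : (p:ℤ) ^ (k+1) ∣ m ^ (c+1) := by
        have h1 : (p:ℤ) ^ (k+1) ∣ m ^ 2 := by
          rw [pow_succ, sq]
          exact mul_dvd_mul hpkm hpm
        exact h1.trans (pow_dvd_pow m (by omega))
      have hdvd2 : (p:ℤ) ^ (k+1) ∣ m * n ^ c := by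
        have heq : m * n ^ c = B * n^(c+1) - (B+1) * m^(c+1) := by linear_combination key
        rw [heq]
        exact dvd_sub (hk1B.mul_right _) (hk1m.mul_left _)
      have hpn : (p:ℤ) ∣ n := by
        have hmabs' : ((m.natAbs : ℤ)) = (p:ℤ)^k := by rw [hmk]; push_cast; ring
        have hpk0 : (p:ℤ)^k ≠ 0 := pow_ne_zero k (by linarith)
        have hpc : (p:ℤ) ∣ n ^ c := by
          rcases Int.natAbs_eq m with h1 | h1 <;> rw [hmabs'] at h1 <;> rw [h1] at hdvd2
          · rw [pow_succ, mul_dvd_mul_iff_left hpk0] at hdvd2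
            exact hdvd2
          · rw [show -(p:ℤ)^k * n^c = -((p:ℤ)^k * n^c) by ring, dvd_neg, pow_succ,
              mul_dvd_mul_iff_left hpk0] at hdvd2
            exact hdvd2
        exact hpprime.dvd_of_dvd_pow hpc
      exact hpprime.not_unit (hcop.isUnit_of_dvd' hpm hpn)
end

section
/- Let d ≥ 4 be an even integer, let a be a nonzero rational number, and let b = σ·p^e for a prime p, σ ∈ {1, −1}, and an integer e ≥ 0. Then there do not exist rational numbers α, β, γ simultaneously satisfying a·α^d + b = 1, a·γ^d + b = 0, and a·β^d + b = −1. (Equivalently, the three rational d-th powers β^d, γ^d, α^d cannot form an arithmetic progression with nonzero common difference 1/a.) -/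
/-- No natural square exceeds another square by exactly 2. -/
lemma aux_sq_ne (A C : ℕ) : C ^ 2 ≠ A ^ 2 + 2 := by
  intro h
  rcases le_or_gt C A with h1 | h1
  · have := Nat.pow_le_pow_left h1 2
    omega
  · have h2 : A + 1 ≤ C := h1
    have h3 := Nat.pow_le_pow_left h2 2
    have hA : A = 0 := by nlinarith
    subst hA
    have hC : C ≤ 1 := by nlinarith
    have := Nat.pow_le_pow_left hC 2
    omega

/-- No even integer power exceeds another (same exponent) by exactly 2. -/
lemma aux_pow_ne (k : ℕ) (m n : ℤ) : n ^ (2 * k) ≠ m ^ (2 * k) + 2 := by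
  intro h
  have hpow : ∀ x : ℤ, (x ^ k) ^ 2 = x ^ (2 * k) := fun x => by
    rw [← pow_mul, mul_comm]
  have h2 : (n ^ k) ^ 2 = (m ^ k) ^ 2 + 2 := by rw [hpow, hpow]; exact h
  have h3 : (((n ^ k).natAbs : ℤ)) ^ 2 = (((m ^ k).natAbs : ℤ)) ^ 2 + 2 := by
    rw [Int.natAbs_sq, Int.natAbs_sq]; exact h2
  have h4 : (n ^ k).natAbs ^ 2 = (m ^ k).natAbs ^ 2 + 2 := by exact_mod_cast h3
  exact aux_sq_ne _ _ h4

/-- Core lemma: there are no rationals `u, v` with `u^d = (p^e - s)/p^e` and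
`v^d = (p^e + s)/p^e` for `s = ±1`, `d = 2k` even. -/
lemma aux_core (p e d k : ℕ) (hp : p.Prime) (hdk : d = 2 * k)
    (s : ℤ) (hs : s = 1 ∨ s = -1) (u v : ℚ)
    (hu : u ^ d = (((p ^ e : ℕ) : ℤ) - s : ℤ) / (((p ^ e : ℕ) : ℤ) : ℚ))
    (hv : v ^ d = (((p ^ e : ℕ) : ℤ) + s : ℤ) / (((p ^ e : ℕ) : ℤ) : ℚ)) : False := by
  have hPpos : (0 : ℤ) < ((p ^ e : ℕ) : ℤ) := by
    exact_mod_cast pow_pos hp.pos e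
  -- coprimality of the numerators with p^e
  have hcop : ∀ M : ℤ, (M = ((p ^ e : ℕ) : ℤ) - s ∨ M = ((p ^ e : ℕ) : ℤ) + s) →
      Nat.Coprime M.natAbs (((p ^ e : ℕ) : ℤ)).natAbs := by
    intro M hM
    rw [Int.natAbs_natCast]
    cases e with
    | zero => simp [Nat.coprime_one_right]
    | succ e' =>
      have hpd : ¬ p ∣ M.natAbs := by
        intro hdvd
        have hdvd' : (p : ℤ) ∣ M := by
          rwa [← Int.natAbs_dvd_natAbs, Int.natAbs_natCast]
        have hpe : (p : ℤ) ∣ ((p ^ (e' + 1) : ℕ) : ℤ) := by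
          push_cast
          exact dvd_pow_self _ (Nat.succ_ne_zero e')
        have hps : (p : ℤ) ∣ s := by
          rcases hM with rfl | rfl
          · simpa using dvd_sub hpe hdvd'
          · simpa using dvd_sub hdvd' hpe
        have hp1 : (p : ℤ) ∣ 1 := by
          rcases hs with rfl | rfl
          · exact hps
          · exact (dvd_neg.mp hps)
        have := Int.le_of_dvd one_pos hp1
        have := hp.two_le
        omega
      exact Nat.Coprime.pow_right _ ((Nat.Prime.coprime_iff_not_dvd hp).mpr hpd).symm
  have hnum_u : u.num ^ d = ((p ^ e : ℕ) : ℤ) - s := by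
    have h1 : (u ^ d).num = ((p ^ e : ℕ) : ℤ) - s := by
      rw [hu]
      exact Rat.num_div_eq_of_coprime hPpos (hcop _ (Or.inl rfl))
    simpa [Rat.num_pow] using h1
  have hnum_v : v.num ^ d = ((p ^ e : ℕ) : ℤ) + s := by
    have h1 : (v ^ d).num = ((p ^ e : ℕ) : ℤ) + s := by
      rw [hv]
      exact Rat.num_div_eq_of_coprime hPpos (hcop _ (Or.inr rfl))
    simpa [Rat.num_pow] using h1
  rcases hs with rfl | rfl
  · exact aux_pow_ne k u.num v.num (by rw [← hdk]; omega)
  · exact aux_pow_ne k v.num u.num (by rw [← hdk]; omega)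

/-- Let `d ≥ 4` be even, `a` a nonzero rational, and `b = σ·p^e`
with `p` prime, `σ ∈ {1,−1}`, `e ≥ 0`. Then there are no rationals `α, β, γ` with
`a·α^d + b = 1`, `a·γ^d + b = 0`, and `a·β^d + b = −1` (equivalently, the `d`-th
powers `β^d, γ^d, α^d` cannot form an arithmetic progression with common
difference `1/a ≠ 0`). -/
theorem no_dth_powers_in_progression
    (p : ℕ) (hp : p.Prime) (d : ℕ) (hd : 4 ≤ d) (heven : Even d)
    (a : ℚ) (ha : a ≠ 0)
    (σ : ℚ) (hσ : σ = 1 ∨ σ = -1) (e : ℕ) (b : ℚ) (hb : b = σ * (p : ℚ) ^ e) :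
    ¬ ∃ α β γ : ℚ, a * α ^ d + b = 1 ∧ a * γ ^ d + b = 0 ∧ a * β ^ d + b = -1 := by
  rintro ⟨α, β, γ, h1, h0, h2⟩
  obtain ⟨k, hk⟩ := heven
  have hdk : d = 2 * k := by omega
  subst hb
  have hppos : (0 : ℚ) < (p : ℚ) := by exact_mod_cast hp.pos
  have hP0 : ((p : ℚ) ^ e) ≠ 0 := by positivity
  have hdne : d ≠ 0 := by omega
  rcases hσ with rfl | rfl
  · -- σ = 1, b = p^e
    have hγ : γ ≠ 0 := by
      intro hγ0
      rw [hγ0, zero_pow hdne] at h0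
      simp at h0
      exact absurd h0.1 hp.ne_zero
    have hu : (α / γ) ^ d = ((p : ℚ) ^ e - 1) / ((p : ℚ) ^ e) := by
      rw [div_pow, div_eq_div_iff (pow_ne_zero d hγ) hP0]
      apply mul_left_cancel₀ ha
      linear_combination ((p : ℚ) ^ e) * h1 - ((p : ℚ) ^ e - 1) * h0
    have hv : (β / γ) ^ d = ((p : ℚ) ^ e + 1) / ((p : ℚ) ^ e) := by
      rw [div_pow, div_eq_div_iff (pow_ne_zero d hγ) hP0]
      apply mul_left_cancel₀ ha
      linear_combination ((p : ℚ) ^ e) * h2 - ((p : ℚ) ^ e + 1) * h0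
    refine aux_core p e d k hp hdk 1 (Or.inl rfl) (α / γ) (β / γ) ?_ ?_
    · rw [hu]; push_cast; ring
    · rw [hv]; push_cast; ring
  · -- σ = -1, b = -p^e
    have hγ : γ ≠ 0 := by
      intro hγ0
      rw [hγ0, zero_pow hdne] at h0
      simp at h0
      exact absurd h0.1 hp.ne_zero
    have hu : (α / γ) ^ d = ((p : ℚ) ^ e + 1) / ((p : ℚ) ^ e) := by
      rw [div_pow, div_eq_div_iff (pow_ne_zero d hγ) hP0]
      apply mul_left_cancel₀ ha
      linear_combination ((p : ℚ) ^ e) * h1 - ((p : ℚ) ^ e + 1) * h0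
    have hv : (β / γ) ^ d = ((p : ℚ) ^ e - 1) / ((p : ℚ) ^ e) := by
      rw [div_pow, div_eq_div_iff (pow_ne_zero d hγ) hP0]
      apply mul_left_cancel₀ ha
      linear_combination ((p : ℚ) ^ e) * h2 - ((p : ℚ) ^ e - 1) * h0
    refine aux_core p e d k hp hdk (-1) (Or.inr rfl) (α / γ) (β / γ) ?_ ?_
    · rw [hu]; push_cast; ring
    · rw [hv]; push_cast; ring
end
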